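/- Let M = {M_1, M_2} be a binary MMDP and M^p = {M_1^p, M_2^p} its preprocessed MMDP. For i ∈ {1, 2}, let ISA^p_{tran,i} be the set of state-action pairs (s, a) of M^p that are informative for M^p and satisfy δ_i^p(⊥_i|s, a) > 0. Then for every policy π and each i ∈ {1, 2}, P_i^π({h ∈ H : inf(h) ∩ ISA^p_{tran,i} ≠ ∅}) = 0, where P_i^π is the probability measure on infinite histories induced from s_init by the policy π and the kernel δ_i^p. -/

import Mathlib

open Finset Filter

/-- A history of length `t` of an MDP with states `S` and actions `A`:
a sequence of `t+1` states and `t` actions `(s₀, a₀, s₁, …, a_{t-1}, s_t)`. -/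
abbrev Hist (S A : Type) (t : ℕ) : Type := (Fin (t + 1) → S) × (Fin t → A)

/-- The last state of a history. -/
def lastState {S A : Type} {t : ℕ} (h : Hist S A t) : S := h.1 (Fin.last t)

/-- The length-`τ` prefix of a history of length `t` (for `τ < t`). -/
def prefixH {S A : Type} {t : ℕ} (h : Hist S A t) (τ : Fin t) : Hist S A τ.val :=
  (fun i => h.1 (Fin.castLE (Nat.succ_le_succ τ.isLt.le) i),
   fun i => h.2 (Fin.castLE τ.isLt.le i))

/-- A history-dependent randomized policy over the available-action map `act`:
for every time `t` and history `h` of length `t` it gives a probability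
distribution over the actions available at the last state of `h`. -/
structure Policy (S A : Type) [Fintype S] [Fintype A] (act : S → Finset A) where
  p : (t : ℕ) → Hist S A t → A → ℝ
  nonneg : ∀ (t : ℕ) (h : Hist S A t) (a : A), 0 ≤ p t h a
  sum_one : ∀ (t : ℕ) (h : Hist S A t), ∑ a ∈ act (lastState h), p t h a = 1
  zero_off : ∀ (t : ℕ) (h : Hist S A t), ∀ a ∉ act (lastState h), p t h a = 0

/-- The probability `P^π(h)` of a history `h` of length `t` under the transition kernel `δ`
    and (the underlying map `πf` of) a policy, starting from the initial state `init`. -/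
noncomputable def histProb {S A : Type} [Fintype S] [Fintype A] [DecidableEq S]
    (init : S) (δ : S → A → S → ℝ)
    (πf : (t : ℕ) → Hist S A t → A → ℝ) (t : ℕ) (h : Hist S A t) : ℝ :=
  (if h.1 0 = init then (1 : ℝ) else 0) *
    ∏ τ : Fin t,
      πf τ.val (prefixH h τ) (h.2 τ) * δ (h.1 τ.castSucc) (h.2 τ) (h.1 τ.succ)

/-- The Bhattacharyya coefficient at step `t` between the history distributions induced by
the kernels `δ1` and `δ2` under the policy map `πf`:
`B(t,π) = Σ_{h_t} √(P₁^π(h_t)·P₂^π(h_t))`. -/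
noncomputable def BC {S A : Type} [Fintype S] [Fintype A] [DecidableEq S]
    (init : S) (δ1 δ2 : S → A → S → ℝ)
    (πf : (t : ℕ) → Hist S A t → A → ℝ) (t : ℕ) : ℝ :=
  ∑ h : Hist S A t,
    Real.sqrt (histProb init δ1 πf t h * histProb init δ2 πf t h)

/-- A binary MMDP: two MDPs sharing the state space `S`, available actions `act`,
and initial state `init`, with transition kernels `δ 0` and `δ 1`. -/
structure BinMMDP (S A : Type) [Fintype S] [Fintype A] where
  act : S → Finset A
  act_nonempty : ∀ s, (act s).Nonempty
  init : S
  δ : Fin 2 → S → A → S → ℝ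
  δ_nonneg : ∀ i s a s', 0 ≤ δ i s a s'
  δ_sum : ∀ i s, ∀ a ∈ act s, ∑ s', δ i s a s' = 1

open MeasureTheory in
/-- The space of infinite histories (trajectories) `(s₀, a₀, s₁, a₁, …)`, recorded as the
sequence of state-action pairs, equipped with the product σ-algebra of the discrete
σ-algebras (so that the σ-algebra is generated by the cylinder sets). -/
def Traj (S A : Type) : Type := ℕ → S × A

instance (S A : Type) : MeasurableSpace (Traj S A) :=
  @MeasurableSpace.pi ℕ (fun _ => S × A) (fun _ => ⊤)

/-- The cylinder set of infinite histories extending the finite history `h`. -/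
def Cyl {S A : Type} {t : ℕ} (h : Hist S A t) : Set (Traj S A) :=
  {ω | (∀ i : Fin (t + 1), (ω i.val).1 = h.1 i) ∧ ∀ i : Fin t, (ω i.val).2 = h.2 i}

/-- `inf(ω)`: the set of state-action pairs occurring infinitely often in the infinite
history `ω`. -/
def InfOften {S A : Type} (ω : Traj S A) : Set (S × A) :=
  {p | {n : ℕ | ω n = p}.Infinite}

/-- `P` is the probability measure on infinite histories induced from the initial state
`init` by the transition kernel `δ` and the policy map `πf` (the Ionescu–Tulcea measure):
it is a probability measure whose value on every cylinder set is the probability of the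
corresponding finite history. -/
def IsInduced {S A : Type} [Fintype S] [Fintype A] [DecidableEq S]
    (init : S) (δ : S → A → S → ℝ) (πf : (t : ℕ) → Hist S A t → A → ℝ)
    (P : MeasureTheory.Measure (Traj S A)) : Prop :=
  MeasureTheory.IsProbabilityMeasure P ∧
    ∀ (t : ℕ) (h : Hist S A t),
      P (Cyl h) = ENNReal.ofReal (histProb init δ πf t h)

section Preprocessing

open scoped Classical

variable {S A : Type}

/-- A state-action pair `(s,a)` is revealing for the pair of kernels `δ 0, δ 1` if the
supports of `δ 0 (·|s,a)` and `δ 1 (·|s,a)` are disjoint. -/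
def RevealingPair (δ : Fin 2 → S → A → S → ℝ) (s : S) (a : A) : Prop :=
  ∀ s' : S, ¬(0 < δ 0 s a s' ∧ 0 < δ 1 s a s')

/-- A state-action pair `(s,a)` is informative for the pair of kernels `δ 0, δ 1` if
`δ 0 (·|s,a) ≠ δ 1 (·|s,a)` and their supports intersect. -/
def InformativePair (δ : Fin 2 → S → A → S → ℝ) (s : S) (a : A) : Prop :=
  δ 0 s a ≠ δ 1 s a ∧ ∃ s' : S, 0 < δ 0 s a s' ∧ 0 < δ 1 s a s'

/-- A state is revealing if some available action at it forms a revealing pair. -/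
def RevealingState (act : S → Finset A) (δ : Fin 2 → S → A → S → ℝ) (s : S) : Prop :=
  ∃ a ∈ act s, RevealingPair δ s a

variable [Fintype S] [Fintype A] [DecidableEq S] [DecidableEq A]

/-- Available actions of the preprocessed MMDP.  The state space is `S ⊕ Fin 2`, where
`Sum.inr i` is the terminal state `⊥_{i+1}`; at a revealing state only the chosen revealing
action `ra s` remains, at the terminal state `⊥_j` only the fresh action `a^{⊥_j}`
(encoded `Sum.inr j`) is available, and all other actions are kept. -/
noncomputable def actp (act : S → Finset A) (δ : Fin 2 → S → A → S → ℝ) (ra : S → A) :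
    S ⊕ Fin 2 → Finset (A ⊕ Fin 2)
  | Sum.inl s =>
      if RevealingState act δ s then {Sum.inl (ra s)} else (act s).image Sum.inl
  | Sum.inr j => {Sum.inr j}

/-- The transition kernel `δ_i^p` of the `i`-th preprocessed MDP `M_i^p`:
the terminal states `⊥_j = Sum.inr j` are absorbing; a revealing pair `(s,a)` moves to
`⊥_i` with probability one; an informative pair `(s,a)` keeps the probabilities of
successors in the common support and redirects the remaining mass of `δ i (·|s,a)` to
`⊥_i`; all other transitions are unchanged. -/
noncomputable def δp (δ : Fin 2 → S → A → S → ℝ) (i : Fin 2) :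
    S ⊕ Fin 2 → A ⊕ Fin 2 → S ⊕ Fin 2 → ℝ
  | Sum.inr j, _, s' => if s' = Sum.inr j then 1 else 0
  | Sum.inl s, Sum.inl a, Sum.inl s' =>
      if RevealingPair δ s a then 0
      else if InformativePair δ s a then
        (if 0 < δ (1 - i) s a s' then δ i s a s' else 0)
      else δ i s a s'
  | Sum.inl s, Sum.inl a, Sum.inr j =>
      if RevealingPair δ s a then (if j = i then 1 else 0)
      else if InformativePair δ s a then
        (if j = i then
          ∑ s' ∈ Finset.univ.filter (fun s' : S => ¬ 0 < δ (1 - i) s a s'), δ i s a s'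
        else 0)
      else 0
  | Sum.inl _, Sum.inr _, _ => 0

/-- `ISA^p`: the set of state-action pairs of the preprocessed MMDP that are informative
for the preprocessed MMDP, together with the two terminal pairs `(⊥_j, a^{⊥_j})`. -/
def ISAp (act : S → Finset A) (δ : Fin 2 → S → A → S → ℝ) (ra : S → A) :
    Set ((S ⊕ Fin 2) × (A ⊕ Fin 2)) :=
  {x | x.2 ∈ actp act δ ra x.1 ∧ InformativePair (fun i => δp δ i) x.1 x.2}
    ∪ {x | ∃ j : Fin 2, x = (Sum.inr j, Sum.inr j)}

end Preprocessing

section Machinery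
open Finset

variable {S A : Type} [Fintype S] [Fintype A] [DecidableEq S] [DecidableEq A]

/-- Extend a history by one action and one state. -/
def extH {n : ℕ} (h : Hist S A n) (a : A) (s' : S) : Hist S A (n + 1) :=
  (Fin.snoc h.1 s', Fin.snoc h.2 a)

def histEquiv (S A : Type) (n : ℕ) : Hist S A (n + 1) ≃ Hist S A n × A × S where
  toFun h := ((Fin.init h.1, Fin.init h.2), h.2 (Fin.last n), h.1 (Fin.last (n + 1)))
  invFun p := extH p.1 p.2.1 p.2.2
  left_inv h := by
    refine Prod.ext ?_ ?_ <;> simp [extH, Fin.snoc_init_self]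
  right_inv p := by
    refine Prod.ext (Prod.ext ?_ ?_) ?_ <;>
      simp [extH, Fin.init_snoc, Fin.snoc_last]

@[simp] lemma lastState_extH {n : ℕ} (h : Hist S A n) (a : A) (s' : S) :
    lastState (extH h a s') = s' := by
  simp [lastState, extH]

lemma prefixH_extH_last {n : ℕ} (h : Hist S A n) (a : A) (s' : S) :
    prefixH (extH h a s') (Fin.last n) = h := by
  refine Prod.ext ?_ ?_
  · funext i
    show (Fin.snoc h.1 s' : Fin (n+2) → S) (Fin.castLE _ i) = h.1 i
    have : (Fin.castLE (Nat.succ_le_succ (Fin.last n).isLt.le) i : Fin (n+2)) =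
        Fin.castSucc i := rfl
    rw [this, Fin.snoc_castSucc]
  · funext i
    show (Fin.snoc h.2 a : Fin (n+1) → A) (Fin.castLE _ i) = h.2 i
    have : (Fin.castLE (Fin.last n).isLt.le i : Fin (n+1)) = Fin.castSucc i := rfl
    rw [this, Fin.snoc_castSucc]

lemma prefixH_extH_castSucc {n : ℕ} (h : Hist S A n) (a : A) (s' : S) (τ : Fin n) :
    prefixH (extH h a s') τ.castSucc = prefixH h τ := by
  refine Prod.ext ?_ ?_
  · funext i
    show (Fin.snoc h.1 s' : Fin (n+2) → S) (Fin.castLE _ i) = h.1 (Fin.castLE _ i)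
    have : (Fin.castLE (Nat.succ_le_succ τ.castSucc.isLt.le) i : Fin (n+2)) =
        Fin.castSucc (Fin.castLE (Nat.succ_le_succ τ.isLt.le) i) := rfl
    rw [this, Fin.snoc_castSucc]
  · funext i
    show (Fin.snoc h.2 a : Fin (n+1) → A) (Fin.castLE _ i) = h.2 (Fin.castLE _ i)
    have : (Fin.castLE τ.castSucc.isLt.le i : Fin (n+1)) =
        Fin.castSucc (Fin.castLE τ.isLt.le i) := rfl
    rw [this, Fin.snoc_castSucc]

end Machinery
section Machinery2
open Finset
set_option linter.unusedSectionVars false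

variable {S A : Type} [Fintype S] [Fintype A] [DecidableEq S] [DecidableEq A]

lemma histProb_extH (init : S) (δ : S → A → S → ℝ)
    (πf : (t : ℕ) → Hist S A t → A → ℝ) {n : ℕ} (h : Hist S A n) (a : A) (s' : S) :
    histProb init δ πf (n + 1) (extH h a s') =
      histProb init δ πf n h * (πf n h a * δ (lastState h) a s') := by
  unfold histProb
  rw [Fin.prod_univ_castSucc]
  have h0 : (extH h a s').1 0 = h.1 0 := by
    show (Fin.snoc h.1 s' : Fin (n+2) → S) 0 = h.1 0
    have : (0 : Fin (n+2)) = Fin.castSucc (0 : Fin (n+1)) := rfl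
    rw [this, Fin.snoc_castSucc]
  have hterm : ∀ τ : Fin n,
      πf τ.castSucc.val (prefixH (extH h a s') τ.castSucc) ((extH h a s').2 τ.castSucc) *
        δ ((extH h a s').1 τ.castSucc.castSucc) ((extH h a s').2 τ.castSucc)
          ((extH h a s').1 τ.castSucc.succ) =
      πf τ.val (prefixH h τ) (h.2 τ) * δ (h.1 τ.castSucc) (h.2 τ) (h.1 τ.succ) := by
    intro τ
    have e1 : (extH h a s').2 τ.castSucc = h.2 τ := by
      show (Fin.snoc h.2 a : Fin (n+1) → A) (Fin.castSucc τ) = _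
      rw [Fin.snoc_castSucc]
    have e2 : (extH h a s').1 τ.castSucc.castSucc = h.1 τ.castSucc := by
      show (Fin.snoc h.1 s' : Fin (n+2) → S) (Fin.castSucc τ.castSucc) = _
      rw [Fin.snoc_castSucc]
    have e3 : (extH h a s').1 τ.castSucc.succ = h.1 τ.succ := by
      show (Fin.snoc h.1 s' : Fin (n+2) → S) τ.castSucc.succ = _
      have : (τ.castSucc.succ : Fin (n+2)) = Fin.castSucc τ.succ := rfl
      rw [this, Fin.snoc_castSucc]
    rw [e1, e2, e3, prefixH_extH_castSucc]
    rfl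
  have hlast :
      πf (Fin.last n).val (prefixH (extH h a s') (Fin.last n)) ((extH h a s').2 (Fin.last n)) *
        δ ((extH h a s').1 (Fin.last n).castSucc) ((extH h a s').2 (Fin.last n))
          ((extH h a s').1 (Fin.last n).succ) =
      πf n h a * δ (lastState h) a s' := by
    have e1 : (extH h a s').2 (Fin.last n) = a := by
      show (Fin.snoc h.2 a : Fin (n+1) → A) (Fin.last n) = _
      rw [Fin.snoc_last]
    have e2 : (extH h a s').1 (Fin.last n).castSucc = lastState h := by
      show (Fin.snoc h.1 s' : Fin (n+2) → S) (Fin.castSucc (Fin.last n)) = _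
      rw [Fin.snoc_castSucc]; rfl
    have e3 : (extH h a s').1 (Fin.last n).succ = s' := by
      show (Fin.snoc h.1 s' : Fin (n+2) → S) (Fin.last n).succ = _
      have : ((Fin.last n).succ : Fin (n+2)) = Fin.last (n+1) := rfl
      rw [this, Fin.snoc_last]
    rw [e1, e2, e3, prefixH_extH_last]
    rfl
  rw [h0, Finset.prod_congr rfl (fun τ _ => hterm τ), hlast]
  ring

/-- Number of occurrences of the state-action pair `x` in the history `h`. -/
def visits (x : S × A) {n : ℕ} (h : Hist S A n) : ℕ :=
  ∑ τ : Fin n, if (h.1 τ.castSucc, h.2 τ) = x then 1 else 0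

lemma visits_extH (x : S × A) {n : ℕ} (h : Hist S A n) (a : A) (s' : S) :
    visits x (extH h a s') = visits x h + (if (lastState h, a) = x then 1 else 0) := by
  unfold visits
  rw [Fin.sum_univ_castSucc]
  congr 1
  · refine Finset.sum_congr rfl fun τ _ => ?_
    have e1 : (extH h a s').2 τ.castSucc = h.2 τ := by
      show (Fin.snoc h.2 a : Fin (n+1) → A) (Fin.castSucc τ) = _
      rw [Fin.snoc_castSucc]
    have e2 : (extH h a s').1 τ.castSucc.castSucc = h.1 τ.castSucc := by
      show (Fin.snoc h.1 s' : Fin (n+2) → S) (Fin.castSucc τ.castSucc) = _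
      rw [Fin.snoc_castSucc]
    rw [e1, e2]
  · have e1 : (extH h a s').2 (Fin.last n) = a := by
      show (Fin.snoc h.2 a : Fin (n+1) → A) (Fin.last n) = _
      rw [Fin.snoc_last]
    have e2 : (extH h a s').1 (Fin.last n).castSucc = lastState h := by
      show (Fin.snoc h.1 s' : Fin (n+2) → S) (Fin.castSucc (Fin.last n)) = _
      rw [Fin.snoc_castSucc]; rfl
    rw [e1, e2]

/-- The history never visits the "dead" state `d`. -/
def aliveH (d : S) {n : ℕ} (h : Hist S A n) : Prop := ∀ t : Fin (n + 1), h.1 t ≠ d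

instance (d : S) {n : ℕ} (h : Hist S A n) : Decidable (aliveH d h) := by
  unfold aliveH; infer_instance

lemma aliveH_extH (d : S) {n : ℕ} (h : Hist S A n) (a : A) (s' : S) :
    aliveH d (extH h a s') ↔ aliveH d h ∧ s' ≠ d := by
  have elast : (extH h a s').1 (Fin.last (n+1)) = s' := by
    show (Fin.snoc h.1 s' : Fin (n+2) → S) (Fin.last (n+1)) = _
    rw [Fin.snoc_last]
  have ecast : ∀ t : Fin (n+1), (extH h a s').1 t.castSucc = h.1 t := by
    intro t
    show (Fin.snoc h.1 s' : Fin (n+2) → S) (Fin.castSucc t) = _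
    rw [Fin.snoc_castSucc]
  constructor
  · intro H
    refine ⟨fun t => ?_, ?_⟩
    · have := H t.castSucc
      rwa [ecast t] at this
    · have := H (Fin.last (n+1))
      rwa [elast] at this
  · rintro ⟨H1, H2⟩ t
    induction t using Fin.lastCases with
    | last => rw [elast]; exact H2
    | cast j => rw [ecast j]; exact H1 j

end Machinery2
section Machinery3
open Finset
set_option linter.unusedSectionVars false

variable {S A : Type} [Fintype S] [Fintype A] [DecidableEq S] [DecidableEq A]
variable {act : S → Finset A}

lemma histProb_nonneg (init : S) (δ : S → A → S → ℝ) (π : Policy S A act)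
    (hδ0 : ∀ s a s', 0 ≤ δ s a s') (n : ℕ) (h : Hist S A n) :
    0 ≤ histProb init δ π.p n h := by
  unfold histProb
  apply mul_nonneg
  · split <;> norm_num
  · exact Finset.prod_nonneg fun τ _ => mul_nonneg (π.nonneg _ _ _) (hδ0 _ _ _)

lemma sum_hist_succ {n : ℕ} (f : Hist S A (n + 1) → ℝ) :
    ∑ h' : Hist S A (n + 1), f h' =
      ∑ h : Hist S A n, ∑ a : A, ∑ s' : S, f (extH h a s') := by
  rw [← Equiv.sum_comp (histEquiv S A n).symm f, Fintype.sum_prod_type]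
  refine Finset.sum_congr rfl fun h _ => ?_
  rw [Fintype.sum_prod_type]
  exact Finset.sum_congr rfl fun a _ => Finset.sum_congr rfl fun s' _ => rfl

lemma pol_sum_univ (π : Policy S A act) (n : ℕ) (h : Hist S A n) :
    ∑ a : A, π.p n h a = 1 := by
  rw [← π.sum_one n h]
  symm
  exact Finset.sum_subset (Finset.subset_univ _) fun a _ ha => π.zero_off n h a ha

lemma lastState_eq_dead (init : S) (δ : S → A → S → ℝ) (π : Policy S A act) (d : S)
    (habs : ∀ a s', δ d a s' = if s' = d then 1 else 0)
    {n : ℕ} (h : Hist S A n)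
    (hpos : 0 < histProb init δ π.p n h) (t : Fin (n + 1)) (ht : h.1 t = d) :
    lastState h = d := by
  have hne : ∀ τ : Fin n, δ (h.1 τ.castSucc) (h.2 τ) (h.1 τ.succ) ≠ 0 := by
    intro τ h0
    have hz : histProb init δ π.p n h = 0 := by
      unfold histProb
      rw [Finset.prod_eq_zero (Finset.mem_univ τ) (by rw [h0]; ring)]
      ring
    rw [hz] at hpos; exact lt_irrefl _ hpos
  have step : ∀ τ : Fin n, h.1 τ.castSucc = d → h.1 τ.succ = d := by
    intro τ hc
    by_contra hs
    have := hne τ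
    rw [hc, habs, if_neg hs] at this
    exact this rfl
  have main : ∀ k (hk : t.val + k ≤ n), h.1 ⟨t.val + k, Nat.lt_succ_of_le hk⟩ = d := by
    intro k
    induction k with
    | zero =>
        intro hk
        have he : (⟨t.val + 0, Nat.lt_succ_of_le hk⟩ : Fin (n + 1)) = t := by
          apply Fin.ext; simp
        rw [he]; exact ht
    | succ k ih =>
        intro hk
        have hk' : t.val + k ≤ n := by omega
        have hlt : t.val + k < n := by omega
        set τ : Fin n := ⟨t.val + k, hlt⟩
        have e1 : τ.castSucc = (⟨t.val + k, Nat.lt_succ_of_le hk'⟩ : Fin (n + 1)) := by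
          apply Fin.ext; simp [τ]
        have e2 : τ.succ = (⟨t.val + (k + 1), Nat.lt_succ_of_le hk⟩ : Fin (n + 1)) := by
          apply Fin.ext; simp [τ]; omega
        have := step τ (by rw [e1]; exact ih hk')
        rwa [e2] at this
  have hle : t.val ≤ n := by omega
  have := main (n - t.val) (by omega)
  unfold lastState
  have he : (Fin.last n) = (⟨t.val + (n - t.val), Nat.lt_succ_of_le (by omega)⟩ : Fin (n + 1)) := by
    apply Fin.ext; simp; omega
  rw [he]; exact this

/-- The supermartingale weight function. -/
noncomputable def Zf (x : S × A) (d : S) (q : ℝ) (m : ℕ) {n : ℕ} (h : Hist S A n) : ℝ :=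
  if m + 1 ≤ visits x h then 1 else if aliveH d h then q ^ (m - visits x h) else 0

lemma Zf_nonneg (x : S × A) (d : S) {q : ℝ} (hq : 0 ≤ q) (m : ℕ) {n : ℕ} (h : Hist S A n) :
    0 ≤ Zf x d q m h := by
  unfold Zf
  split
  · norm_num
  · split
    · exact pow_nonneg hq _
    · exact le_refl 0
lemma key_ineq (init : S) (δ : S → A → S → ℝ) (π : Policy S A act)
    (hδ0 : ∀ s a s', 0 ≤ δ s a s')
    (hδsum : ∀ s, ∀ a ∈ act s, ∑ s', δ s a s' = 1)
    (d : S) (habs : ∀ a s', δ d a s' = if s' = d then 1 else 0)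
    (sx : S) (ax : A) (hsd : sx ≠ d) (haxact : ax ∈ act sx)
    {q : ℝ} (hq : q = 1 - δ sx ax d) (hq0 : 0 ≤ q)
    (m n : ℕ) (h : Hist S A n) (hpos : 0 < histProb init δ π.p n h) :
    ∑ a : A, π.p n h a *
        (∑ s' : S, δ (lastState h) a s' * Zf (sx, ax) d q m (extH h a s')) ≤
      Zf (sx, ax) d q m h := by
  set x : S × A := (sx, ax) with hxdef
  set w := visits x h with hwdef
  have hq1 : q ≤ 1 := by have := hδ0 sx ax d; rw [hq]; linarith
  by_cases hw : m + 1 ≤ w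
  · -- cap reached
    have hZh : Zf x d q m h = 1 := by unfold Zf; rw [if_pos hw]
    have hZe : ∀ (a : A) (s' : S), Zf x d q m (extH h a s') = 1 := by
      intro a s'
      unfold Zf
      rw [if_pos (by rw [visits_extH]; omega)]
    rw [hZh]
    have : ∀ a : A, π.p n h a *
        (∑ s' : S, δ (lastState h) a s' * Zf x d q m (extH h a s')) = π.p n h a := by
      intro a
      by_cases hpa : π.p n h a = 0
      · rw [hpa]; ring
      · have haact : a ∈ act (lastState h) := by
          by_contra hc
          exact hpa (π.zero_off n h a hc)
        have : ∑ s' : S, δ (lastState h) a s' * Zf x d q m (extH h a s')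
            = ∑ s' : S, δ (lastState h) a s' := by
          refine Finset.sum_congr rfl fun s' _ => ?_
          rw [hZe a s']; ring
        rw [this, hδsum _ _ haact, mul_one]
    rw [Finset.sum_congr rfl fun a _ => this a]
    rw [pol_sum_univ]
  · push_neg at hw
    have hwm : w ≤ m := by omega
    by_cases hal : aliveH d h
    · -- alive case
      have hZh : Zf x d q m h = q ^ (m - w) := by
        unfold Zf; rw [if_neg (by omega), if_pos hal]
      rw [hZh]
      have key_a : ∀ a : A, π.p n h a *
          (∑ s' : S, δ (lastState h) a s' * Zf x d q m (extH h a s')) ≤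
          π.p n h a * q ^ (m - w) := by
        intro a
        by_cases hpa : π.p n h a = 0
        · rw [hpa]; simp
        have haact : a ∈ act (lastState h) := by
          by_contra hc; exact hpa (π.zero_off n h a hc)
        refine mul_le_mul_of_nonneg_left ?_ (π.nonneg n h a)
        by_cases hx : (lastState h, a) = x
        · -- a visit step
          have hlast : lastState h = sx := congrArg Prod.fst hx
          have ha : a = ax := congrArg Prod.snd hx
          by_cases hwm' : w = m
          · have hZe : ∀ s' : S, Zf x d q m (extH h a s') = 1 := by
              intro s'
              unfold Zf
              rw [if_pos (by rw [visits_extH, if_pos hx]; omega)]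
            have : ∑ s' : S, δ (lastState h) a s' * Zf x d q m (extH h a s')
                = ∑ s' : S, δ (lastState h) a s' := by
              refine Finset.sum_congr rfl fun s' _ => ?_
              rw [hZe s']; ring
            rw [this, hδsum _ _ haact, hwm', Nat.sub_self, pow_zero]
          · have hwlt : w < m := lt_of_le_of_ne hwm hwm'
            have hZe : ∀ s' : S, Zf x d q m (extH h a s')
                = if s' = d then 0 else q ^ (m - w - 1) := by
              intro s'
              unfold Zf
              rw [visits_extH, if_pos hx, if_neg (by omega)]
              by_cases hs' : s' = d
              · rw [if_pos hs', if_neg (by rw [aliveH_extH]; tauto)]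
              · rw [if_neg hs', if_pos ((aliveH_extH d h a s').mpr ⟨hal, hs'⟩)]
                congr 1
            have hsplit : ∀ s' : S, δ (lastState h) a s' * Zf x d q m (extH h a s')
                = δ (lastState h) a s' * q ^ (m - w - 1)
                  - (if s' = d then δ (lastState h) a d * q ^ (m - w - 1) else 0) := by
              intro s'
              rw [hZe s']
              by_cases hs' : s' = d
              · subst hs'; rw [if_pos rfl, if_pos rfl]; ring
              · rw [if_neg hs', if_neg hs']; ring
            rw [Finset.sum_congr rfl fun s' _ => hsplit s', Finset.sum_sub_distrib,
              ← Finset.sum_mul, hδsum _ _ haact, Finset.sum_ite_eq' Finset.univ d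
                (fun _ => δ (lastState h) a d * q ^ (m - w - 1))]
            rw [if_pos (Finset.mem_univ d), hlast, ha]
            have : (1 : ℝ) * q ^ (m - w - 1) - δ sx ax d * q ^ (m - w - 1)
                = q * q ^ (m - w - 1) := by rw [hq]; ring
            rw [this, ← pow_succ']
            have : m - w - 1 + 1 = m - w := by omega
            rw [this]
        · -- not a visit step
          have hZe : ∀ s' : S, Zf x d q m (extH h a s') ≤ q ^ (m - w) := by
            intro s'
            unfold Zf
            rw [visits_extH, if_neg hx, if_neg (by omega)]
            split
            · exact le_refl _
            · exact pow_nonneg hq0 _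
          calc ∑ s' : S, δ (lastState h) a s' * Zf x d q m (extH h a s')
              ≤ ∑ s' : S, δ (lastState h) a s' * q ^ (m - w) :=
                Finset.sum_le_sum fun s' _ =>
                  mul_le_mul_of_nonneg_left (hZe s') (hδ0 _ _ _)
            _ = q ^ (m - w) := by rw [← Finset.sum_mul, hδsum _ _ haact, one_mul]
      calc ∑ a : A, π.p n h a *
            (∑ s' : S, δ (lastState h) a s' * Zf x d q m (extH h a s'))
          ≤ ∑ a : A, π.p n h a * q ^ (m - w) := Finset.sum_le_sum fun a _ => key_a a
        _ = q ^ (m - w) := by rw [← Finset.sum_mul, pol_sum_univ, one_mul]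
    · -- dead case
      have hZh : Zf x d q m h = 0 := by unfold Zf; rw [if_neg (by omega), if_neg hal]
      rw [hZh]
      have hld : lastState h = d := by
        unfold aliveH at hal
        push_neg at hal
        obtain ⟨t, ht⟩ := hal
        exact lastState_eq_dead init δ π d habs h hpos t ht
      have : ∀ a : A, π.p n h a *
          (∑ s' : S, δ (lastState h) a s' * Zf x d q m (extH h a s')) = 0 := by
        intro a
        have hsum : ∑ s' : S, δ (lastState h) a s' * Zf x d q m (extH h a s')
            = Zf x d q m (extH h a d) := by
          rw [hld]
          have : ∀ s' : S, δ d a s' * Zf x d q m (extH h a s')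
              = if s' = d then Zf x d q m (extH h a d) else 0 := by
            intro s'
            rw [habs]
            by_cases hs' : s' = d
            · subst hs'; rw [if_pos rfl, if_pos rfl, one_mul]
            · rw [if_neg hs', if_neg hs', zero_mul]
          rw [Finset.sum_congr rfl fun s' _ => this s',
            Finset.sum_ite_eq' Finset.univ d (fun _ => Zf x d q m (extH h a d)),
            if_pos (Finset.mem_univ d)]
        have hZad : Zf x d q m (extH h a d) = 0 := by
          unfold Zf
          rw [visits_extH]
          have hnx : (lastState h, a) ≠ x := by
            rw [hld, hxdef]
            intro hc
            exact hsd (congrArg Prod.fst hc).symm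
          rw [if_neg hnx, if_neg (by omega), if_neg (by
            rw [aliveH_extH]; tauto)]
        rw [hsum, hZad, mul_zero]
      rw [Finset.sum_congr rfl fun a _ => this a, Finset.sum_const, smul_zero]
lemma step_bound (init : S) (δ : S → A → S → ℝ) (π : Policy S A act)
    (hδ0 : ∀ s a s', 0 ≤ δ s a s')
    (hδsum : ∀ s, ∀ a ∈ act s, ∑ s', δ s a s' = 1)
    (d : S) (habs : ∀ a s', δ d a s' = if s' = d then 1 else 0)
    (sx : S) (ax : A) (hsd : sx ≠ d) (haxact : ax ∈ act sx)
    {q : ℝ} (hq : q = 1 - δ sx ax d) (hq0 : 0 ≤ q) (m n : ℕ) :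
    ∑ h' : Hist S A (n + 1), histProb init δ π.p (n + 1) h' * Zf (sx, ax) d q m h' ≤
      ∑ h : Hist S A n, histProb init δ π.p n h * Zf (sx, ax) d q m h := by
  rw [sum_hist_succ]
  refine Finset.sum_le_sum fun h _ => ?_
  have expand : ∑ a : A, ∑ s' : S,
      histProb init δ π.p (n + 1) (extH h a s') * Zf (sx, ax) d q m (extH h a s')
      = histProb init δ π.p n h * ∑ a : A, π.p n h a *
          (∑ s' : S, δ (lastState h) a s' * Zf (sx, ax) d q m (extH h a s')) := by
    rw [Finset.mul_sum]
    refine Finset.sum_congr rfl fun a _ => ?_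
    rw [Finset.mul_sum, Finset.mul_sum]
    refine Finset.sum_congr rfl fun s' _ => ?_
    rw [histProb_extH]
    ring
  rw [expand]
  rcases eq_or_lt_of_le (histProb_nonneg init δ π hδ0 n h) with h0 | hpos
  · rw [← h0]; ring_nf; exact le_refl _
  · exact mul_le_mul_of_nonneg_left
      (key_ineq init δ π hδ0 hδsum d habs sx ax hsd haxact hq hq0 m n h hpos) hpos.le

lemma base_bound (init : S) (δ : S → A → S → ℝ) (π : Policy S A act)
    (d : S) (hinit : init ≠ d) (sx : S) (ax : A) (q : ℝ) (m : ℕ) :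
    ∑ h : Hist S A 0, histProb init δ π.p 0 h * Zf (sx, ax) d q m h = q ^ m := by
  rw [Fintype.sum_prod_type]
  rw [← Equiv.sum_comp (Equiv.funUnique (Fin 1) S).symm]
  have hterm : ∀ s : S, ∀ v : Fin 0 → A,
      histProb init δ π.p 0 ((Equiv.funUnique (Fin 1) S).symm s, v) *
        Zf (sx, ax) d q m ((Equiv.funUnique (Fin 1) S).symm s, v)
      = if s = init then (if s = d then 0 else q ^ m) else 0 := by
    intro s v
    have hP : histProb init δ π.p 0 ((Equiv.funUnique (Fin 1) S).symm s, v)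
        = if s = init then 1 else 0 := by
      unfold histProb
      simp [Equiv.funUnique]
    have hV : visits (sx, ax) ((Equiv.funUnique (Fin 1) S).symm s, v) = 0 := by
      unfold visits; simp
    have hZ : Zf (sx, ax) d q m ((Equiv.funUnique (Fin 1) S).symm s, v)
        = if s = d then 0 else q ^ m := by
      unfold Zf
      rw [hV, if_neg (by omega)]
      by_cases hd : s = d
      · rw [if_pos hd, if_neg]
        intro hA
        exact (hA 0) hd
      · rw [if_neg hd, if_pos]
        · rw [Nat.sub_zero]
        · intro t
          simpa [Equiv.funUnique] using hd
    rw [hP, hZ]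
    by_cases hs : s = init
    · rw [if_pos hs, if_pos hs, one_mul]
    · rw [if_neg hs, if_neg hs, zero_mul]
  calc ∑ s : S, ∑ v : Fin 0 → A,
        histProb init δ π.p 0 ((Equiv.funUnique (Fin 1) S).symm s, v) *
          Zf (sx, ax) d q m ((Equiv.funUnique (Fin 1) S).symm s, v)
      = ∑ s : S, ∑ _v : Fin 0 → A, (if s = init then (if s = d then 0 else q ^ m) else 0) :=
        Finset.sum_congr rfl fun s _ => Finset.sum_congr rfl fun v _ => hterm s v
    _ = ∑ s : S, (if s = init then (if s = d then 0 else q ^ m) else 0) := by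
        refine Finset.sum_congr rfl fun s _ => ?_
        simp
    _ = q ^ m := by
        rw [Finset.sum_ite_eq' Finset.univ init
          (fun s => if s = d then 0 else q ^ m)]
        rw [if_pos (Finset.mem_univ init), if_neg hinit]
lemma finite_bound (init : S) (δ : S → A → S → ℝ) (π : Policy S A act)
    (hδ0 : ∀ s a s', 0 ≤ δ s a s')
    (hδsum : ∀ s, ∀ a ∈ act s, ∑ s', δ s a s' = 1)
    (d : S) (habs : ∀ a s', δ d a s' = if s' = d then 1 else 0)
    (hinit : init ≠ d)
    (sx : S) (ax : A) (hsd : sx ≠ d) (haxact : ax ∈ act sx)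
    {q : ℝ} (hq : q = 1 - δ sx ax d) (hq0 : 0 ≤ q) (m n : ℕ) :
    ∑ h ∈ Finset.univ.filter (fun h : Hist S A n => m + 1 ≤ visits (sx, ax) h),
        histProb init δ π.p n h ≤ q ^ m := by
  have hG : ∀ n : ℕ,
      ∑ h : Hist S A n, histProb init δ π.p n h * Zf (sx, ax) d q m h ≤ q ^ m := by
    intro n
    induction n with
    | zero => exact le_of_eq (base_bound init δ π d hinit sx ax q m)
    | succ n ih =>
        exact le_trans (step_bound init δ π hδ0 hδsum d habs sx ax hsd haxact hq hq0 m n) ih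
  calc ∑ h ∈ Finset.univ.filter (fun h : Hist S A n => m + 1 ≤ visits (sx, ax) h),
        histProb init δ π.p n h
      = ∑ h ∈ Finset.univ.filter (fun h : Hist S A n => m + 1 ≤ visits (sx, ax) h),
          histProb init δ π.p n h * Zf (sx, ax) d q m h := by
        refine Finset.sum_congr rfl fun h hh => ?_
        have := (Finset.mem_filter.mp hh).2
        rw [show Zf (sx, ax) d q m h = 1 by unfold Zf; rw [if_pos this], mul_one]
    _ ≤ ∑ h : Hist S A n, histProb init δ π.p n h * Zf (sx, ax) d q m h := by
        refine Finset.sum_le_sum_of_subset_of_nonneg (Finset.filter_subset _ _)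
          fun h _ _ => mul_nonneg (histProb_nonneg init δ π hδ0 n h)
            (Zf_nonneg (sx, ax) d hq0 m h)
    _ ≤ q ^ m := hG n

/-- The finite history consisting of the first `n` steps of an infinite trajectory. -/
def trajHist (ω : Traj S A) (n : ℕ) : Hist S A n :=
  (fun i => (ω i.val).1, fun i => (ω i.val).2)

lemma mem_cyl_trajHist (ω : Traj S A) (n : ℕ) : ω ∈ Cyl (trajHist ω n) :=
  ⟨fun _ => rfl, fun _ => rfl⟩

lemma eq_trajHist_of_mem_cyl {ω : Traj S A} {n : ℕ} {h : Hist S A n}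
    (hω : ω ∈ Cyl h) : h = trajHist ω n := by
  refine Prod.ext ?_ ?_
  · funext i; exact (hω.1 i).symm
  · funext i; exact (hω.2 i).symm

lemma visits_trajHist (x : S × A) (ω : Traj S A) (n : ℕ) :
    visits x (trajHist ω n) = ∑ t ∈ Finset.range n, (if ω t = x then 1 else 0) := by
  unfold visits
  have hterm : ∀ τ : Fin n,
      (if ((trajHist ω n).1 τ.castSucc, (trajHist ω n).2 τ) = x then 1 else 0)
        = (if ω τ.val = x then 1 else 0) := by
    intro τ
    have : ((trajHist ω n).1 τ.castSucc, (trajHist ω n).2 τ) = ω τ.val := by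
      show ((ω τ.val).1, (ω τ.val).2) = ω τ.val
      exact Prod.mk.eta
    rw [this]
  rw [Finset.sum_congr rfl fun τ _ => hterm τ]
  exact Fin.sum_univ_eq_sum_range (fun t => if ω t = x then 1 else 0) n
open MeasureTheory in
lemma null_infOften (init : S) (δ : S → A → S → ℝ) (π : Policy S A act)
    (hδ0 : ∀ s a s', 0 ≤ δ s a s')
    (hδsum : ∀ s, ∀ a ∈ act s, ∑ s', δ s a s' = 1)
    (d : S) (habs : ∀ a s', δ d a s' = if s' = d then 1 else 0)
    (hinit : init ≠ d)
    (sx : S) (ax : A) (hsd : sx ≠ d) (haxact : ax ∈ act sx)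
    (hppos : 0 < δ sx ax d)
    (P : Measure (Traj S A)) (hP : IsInduced init δ π.p P) :
    P {ω : Traj S A | (sx, ax) ∈ InfOften ω} = 0 := by
  set x : S × A := (sx, ax) with hxdef
  set q : ℝ := 1 - δ sx ax d with hq
  have hple : δ sx ax d ≤ 1 := by
    have := hδsum sx ax haxact
    rw [← this]
    exact Finset.single_le_sum (fun s' _ => hδ0 sx ax s') (Finset.mem_univ d)
  have hq0 : 0 ≤ q := by rw [hq]; linarith
  have hqlt : q < 1 := by rw [hq]; linarith
  -- the events "at least m+1 visits among the first n steps"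
  have main : ∀ m : ℕ, P {ω : Traj S A | x ∈ InfOften ω} ≤ ENNReal.ofReal (q ^ m) := by
    intro m
    set C : ℕ → Set (Traj S A) := fun n =>
      ⋃ h ∈ Finset.univ.filter (fun h : Hist S A n => m + 1 ≤ visits x h), Cyl h with hC
    have hmem : ∀ (ω : Traj S A) (n : ℕ),
        ω ∈ C n ↔ m + 1 ≤ visits x (trajHist ω n) := by
      intro ω n
      constructor
      · intro hω
        rw [hC] at hω
        simp only [Set.mem_iUnion] at hω
        obtain ⟨h, hh, hωh⟩ := hω
        rw [eq_trajHist_of_mem_cyl hωh] at hh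
        exact (Finset.mem_filter.mp hh).2
      · intro hv
        rw [hC]
        simp only [Set.mem_iUnion]
        exact ⟨trajHist ω n, Finset.mem_filter.mpr ⟨Finset.mem_univ _, hv⟩,
          mem_cyl_trajHist ω n⟩
    have hmono : Monotone C := by
      intro n n' hnn' ω hω
      rw [hmem] at hω ⊢
      rw [visits_trajHist] at hω ⊢
      calc m + 1 ≤ ∑ t ∈ Finset.range n, (if ω t = x then 1 else 0) := hω
        _ ≤ ∑ t ∈ Finset.range n', (if ω t = x then 1 else 0) :=
          Finset.sum_le_sum_of_subset_of_nonneg (Finset.range_subset_range.mpr hnn')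
            (fun t _ _ => by split <;> norm_num)
    have hsub : {ω : Traj S A | x ∈ InfOften ω} ⊆ ⋃ n, C n := by
      intro ω hω
      classical
      have hinf : {t : ℕ | ω t = x}.Infinite := hω
      obtain ⟨F, hFsub, hFcard⟩ := hinf.exists_subset_card_eq (m + 1)
      set n : ℕ := F.sup id + 1 with hn
      refine Set.mem_iUnion.mpr ⟨n, (hmem ω n).mpr ?_⟩
      rw [visits_trajHist]
      have hFss : F ⊆ (Finset.range n).filter (fun t => ω t = x) := by
        intro t ht
        refine Finset.mem_filter.mpr ⟨Finset.mem_range.mpr ?_, hFsub ht⟩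
        have : t ≤ F.sup id := Finset.le_sup (f := id) ht
        omega
      calc m + 1 = F.card := hFcard.symm
        _ ≤ ((Finset.range n).filter (fun t => ω t = x)).card := Finset.card_le_card hFss
        _ = ∑ t ∈ Finset.range n, (if ω t = x then 1 else 0) := by convert Finset.card_filter _ _
    have hCn : ∀ n, P (C n) ≤ ENNReal.ofReal (q ^ m) := by
      intro n
      calc P (C n)
          ≤ ∑ h ∈ Finset.univ.filter (fun h : Hist S A n => m + 1 ≤ visits x h),
              P (Cyl h) := measure_biUnion_finset_le _ _
        _ = ∑ h ∈ Finset.univ.filter (fun h : Hist S A n => m + 1 ≤ visits x h),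
              ENNReal.ofReal (histProb init δ π.p n h) :=
            Finset.sum_congr rfl fun h _ => hP.2 n h
        _ = ENNReal.ofReal (∑ h ∈ Finset.univ.filter
              (fun h : Hist S A n => m + 1 ≤ visits x h), histProb init δ π.p n h) :=
            (ENNReal.ofReal_sum_of_nonneg fun h _ => histProb_nonneg init δ π hδ0 n h).symm
        _ ≤ ENNReal.ofReal (q ^ m) := ENNReal.ofReal_le_ofReal
            (finite_bound init δ π hδ0 hδsum d habs hinit sx ax hsd haxact hq hq0 m n)
    calc P {ω : Traj S A | x ∈ InfOften ω} ≤ P (⋃ n, C n) := measure_mono hsub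
      _ = ⨆ n, P (C n) := (hmono.directed_le).measure_iUnion
      _ ≤ ENNReal.ofReal (q ^ m) := iSup_le hCn
  have htend : Filter.Tendsto (fun m : ℕ => ENNReal.ofReal (q ^ m)) Filter.atTop (nhds 0) := by
    have h1 : Filter.Tendsto (fun m : ℕ => q ^ m) Filter.atTop (nhds 0) :=
      tendsto_pow_atTop_nhds_zero_of_lt_one hq0 hqlt
    have := ENNReal.tendsto_ofReal h1
    simpa using this
  have := ge_of_tendsto' htend main
  simpa using nonpos_iff_eq_zero.mp this

end Machinery3
section Inst
open Finset
set_option linter.unusedSectionVars false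

variable {S A : Type} [Fintype S] [Fintype A] [DecidableEq S] [DecidableEq A]

lemma δp_nonneg (δ : Fin 2 → S → A → S → ℝ) (hδ0 : ∀ i s a s', 0 ≤ δ i s a s')
    (i : Fin 2) (sp : S ⊕ Fin 2) (ap : A ⊕ Fin 2) (s' : S ⊕ Fin 2) :
    0 ≤ δp δ i sp ap s' := by
  rcases sp with s | j
  · rcases ap with a | k
    · rcases s' with t | j
      · simp only [δp]
        split
        · exact le_refl 0
        · split
          · split
            · exact hδ0 i s a t
            · exact le_refl 0
          · exact hδ0 i s a t
      · simp only [δp]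
        split
        · split <;> norm_num
        · split
          · split
            · exact Finset.sum_nonneg fun t _ => hδ0 i s a t
            · exact le_refl 0
          · exact le_refl 0
    · simp only [δp]; exact le_refl 0
  · simp only [δp]; split <;> norm_num

lemma δp_sum (act : S → Finset A) (δ : Fin 2 → S → A → S → ℝ)
    (hδ1 : ∀ i s, ∀ a ∈ act s, ∑ s', δ i s a s' = 1)
    (ra : S → A)
    (hra : ∀ s, RevealingState act δ s → ra s ∈ act s ∧ RevealingPair δ s (ra s))
    (i : Fin 2) (sp : S ⊕ Fin 2) (ap : A ⊕ Fin 2) (hap : ap ∈ actp act δ ra sp) :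
    ∑ s', δp δ i sp ap s' = 1 := by
  rcases sp with s | j
  · -- ap is `inl a` with `a ∈ act s`
    obtain ⟨a, ha, rfl⟩ : ∃ a, a ∈ act s ∧ Sum.inl a = ap := by
      simp only [actp] at hap
      split at hap
      · next hrs =>
          rw [Finset.mem_singleton] at hap
          exact ⟨ra s, (hra s hrs).1, hap.symm⟩
      · obtain ⟨a, ha, rfl⟩ := Finset.mem_image.mp hap
        exact ⟨a, ha, rfl⟩
    rw [Fintype.sum_sum_type]
    by_cases hrev : RevealingPair δ s a
    · have h1 : ∀ t : S, δp δ i (Sum.inl s) (Sum.inl a) (Sum.inl t) = 0 := by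
        intro t; simp only [δp]; rw [if_pos hrev]
      have h2 : ∀ j : Fin 2, δp δ i (Sum.inl s) (Sum.inl a) (Sum.inr j)
          = if j = i then 1 else 0 := by
        intro j; simp only [δp]; rw [if_pos hrev]
      rw [Finset.sum_congr rfl fun t _ => h1 t, Finset.sum_congr rfl fun j _ => h2 j]
      rw [Finset.sum_const, smul_zero, Finset.sum_ite_eq' Finset.univ i (fun _ => (1:ℝ)),
        if_pos (Finset.mem_univ i), zero_add]
    · by_cases hinf : InformativePair δ s a
      · have h1 : ∀ t : S, δp δ i (Sum.inl s) (Sum.inl a) (Sum.inl t)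
            = if 0 < δ (1 - i) s a t then δ i s a t else 0 := by
          intro t; simp only [δp]; rw [if_neg hrev, if_pos hinf]
        have h2 : ∀ j : Fin 2, δp δ i (Sum.inl s) (Sum.inl a) (Sum.inr j)
            = if j = i then
                ∑ t ∈ Finset.univ.filter (fun t : S => ¬ 0 < δ (1 - i) s a t), δ i s a t
              else 0 := by
          intro j; simp only [δp]; rw [if_neg hrev, if_pos hinf]
        rw [Finset.sum_congr rfl fun t _ => h1 t, Finset.sum_congr rfl fun j _ => h2 j]
        rw [Finset.sum_ite_eq' Finset.univ i, if_pos (Finset.mem_univ i)]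
        rw [← Finset.sum_filter]
        rw [Finset.sum_filter_add_sum_filter_not]
        exact hδ1 i s a ha
      · have h1 : ∀ t : S, δp δ i (Sum.inl s) (Sum.inl a) (Sum.inl t) = δ i s a t := by
          intro t; simp only [δp]; rw [if_neg hrev, if_neg hinf]
        have h2 : ∀ j : Fin 2, δp δ i (Sum.inl s) (Sum.inl a) (Sum.inr j) = 0 := by
          intro j; simp only [δp]; rw [if_neg hrev, if_neg hinf]
        rw [Finset.sum_congr rfl fun t _ => h1 t, Finset.sum_congr rfl fun j _ => h2 j]
        rw [Finset.sum_const, smul_zero, add_zero]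
        exact hδ1 i s a ha
  · -- terminal state
    have h1 : ∀ s', δp δ i (Sum.inr j) ap s' = if s' = Sum.inr j then 1 else 0 := by
      intro s'; simp only [δp]
    rw [Finset.sum_congr rfl fun s' _ => h1 s',
      Finset.sum_ite_eq' Finset.univ (Sum.inr j : S ⊕ Fin 2) (fun _ => (1:ℝ)),
      if_pos (Finset.mem_univ _)]

end Inst



/-- **Finitely often visited transient informative state-action pairs.**
Let `M` be a binary MMDP given by `(act, init, δ 0, δ 1)` and `M^p` its preprocessed MMDP
(with chosen revealing actions `ra`).  For `i ∈ {1,2}`, `ISA^p_{tran,i}` is the set of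
state-action pairs of `M^p` that are informative for `M^p` and have
`δ_i^p(⊥_i|s,a) > 0`.  Then for every policy `π` and the measure `P_i^π` on infinite
histories induced from `s_init` by `π` and `δ_i^p`,
`P_i^π({h : inf(h) ∩ ISA^p_{tran,i} ≠ ∅}) = 0`. -/
theorem induced_measure_infOften_transient_eq_zero
    {S A : Type} [Fintype S] [Fintype A] [DecidableEq S] [DecidableEq A]
    (act : S → Finset A) (hact : ∀ s, (act s).Nonempty) (init : S)
    (δ : Fin 2 → S → A → S → ℝ)
    (hδ0 : ∀ i s a s', 0 ≤ δ i s a s')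
    (hδ1 : ∀ i s, ∀ a ∈ act s, ∑ s', δ i s a s' = 1)
    (ra : S → A)
    (hra : ∀ s, RevealingState act δ s → ra s ∈ act s ∧ RevealingPair δ s (ra s))
    (i : Fin 2)
    (π : Policy (S ⊕ Fin 2) (A ⊕ Fin 2) (actp act δ ra))
    (P : MeasureTheory.Measure (Traj (S ⊕ Fin 2) (A ⊕ Fin 2)))
    (hP : IsInduced (Sum.inl init) (δp δ i) π.p P) :
    P {ω | (InfOften ω ∩
        {x : (S ⊕ Fin 2) × (A ⊕ Fin 2) |
          x.2 ∈ actp act δ ra x.1 ∧ InformativePair (fun k => δp δ k) x.1 x.2 ∧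
            0 < δp δ i x.1 x.2 (Sum.inr i)}).Nonempty} = 0 := by
  classical
  have hcover : {ω : Traj (S ⊕ Fin 2) (A ⊕ Fin 2) | (InfOften ω ∩
      {x : (S ⊕ Fin 2) × (A ⊕ Fin 2) |
        x.2 ∈ actp act δ ra x.1 ∧ InformativePair (fun k => δp δ k) x.1 x.2 ∧
          0 < δp δ i x.1 x.2 (Sum.inr i)}).Nonempty} ⊆
      ⋃ x : (S ⊕ Fin 2) × (A ⊕ Fin 2),
        {ω : Traj (S ⊕ Fin 2) (A ⊕ Fin 2) |
          (x.2 ∈ actp act δ ra x.1 ∧ InformativePair (fun k => δp δ k) x.1 x.2 ∧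
            0 < δp δ i x.1 x.2 (Sum.inr i)) ∧ x ∈ InfOften ω} := by
    rintro ω ⟨x, hx1, hx2⟩
    exact Set.mem_iUnion.mpr ⟨x, hx2, hx1⟩
  refine MeasureTheory.measure_mono_null hcover (MeasureTheory.measure_iUnion_null fun x => ?_)
  by_cases hx : x.2 ∈ actp act δ ra x.1 ∧ InformativePair (fun k => δp δ k) x.1 x.2 ∧
      0 < δp δ i x.1 x.2 (Sum.inr i)
  · obtain ⟨hact', hinfo, hpos⟩ := hx
    obtain ⟨x1, x2⟩ := x
    rcases x1 with s | j
    · rcases x2 with a | k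
      · -- the genuine case: an informative pair with positive escape probability
        refine MeasureTheory.measure_mono_null (fun ω hω => hω.2) ?_
        exact null_infOften (Sum.inl init) (δp δ i) π (δp_nonneg δ hδ0 i)
          (δp_sum act δ hδ1 ra hra i) (Sum.inr i)
          (fun ap s' => by simp only [δp]) (by simp)
          (Sum.inl s) (Sum.inl a) (by simp) hact' hpos P hP
      · exfalso
        obtain ⟨s', h0, _⟩ := hinfo.2
        simp only [δp] at h0
        exact lt_irrefl 0 h0
    · exfalso
      apply hinfo.1
      funext s'
      simp only [δp]
  · exact MeasureTheory.measure_mono_null (fun ω hω => absurd hω.1 hx)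
      MeasureTheory.measure_empty
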